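/- Under the efficient-market hypothesis conditioning ℰ (true prefix probabilities pᵢ known, conditional suffix probabilities all 1/2, and counts nᵢ·π̂ᵢ independent Binomial(nᵢ, 1/2)), the moment-generating function of the estimated market information Î^{L+1} is M(t) = eᵗ · ∏_{i=1}^{2^L} ∑_{j=0}^{nᵢ} C(nᵢ,j)·2^{−nᵢ} · (j/nᵢ)^{t·pᵢ·(j/nᵢ)/ln 2} · (1 − j/nᵢ)^{t·pᵢ·(1−j/nᵢ)/ln 2}, for all t for which the expression is defined. -/
import Mathlib


open Real Finset

lemma key (t pI x : ℝ) (hp : 0 < pI) (hx0 : 0 ≤ x) (hx1 : x ≤ 1) :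
    Real.exp (t * (-(pI) * logb 2 (pI / 2)
      + pI * x * logb 2 (pI * x)
      + pI * (1 - x) * logb 2 (pI * (1 - x))))
    = Real.exp (t * pI) * x ^ (t * pI * x / Real.log 2)
        * (1 - x) ^ (t * pI * (1 - x) / Real.log 2) := by
  have h2 : Real.log 2 ≠ 0 := ne_of_gt (Real.log_pos (by norm_num))
  have hhalf : logb 2 (pI / 2) = logb 2 pI - 1 := by
    rw [Real.logb_div hp.ne' two_ne_zero, Real.logb_self_eq_one] <;> norm_num
  rcases eq_or_lt_of_le hx0 with h0 | h0
  · rw [← h0]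
    simp [hhalf]
    ring_nf
    tauto
  rcases eq_or_lt_of_le hx1 with h1 | h1
  · rw [h1]
    simp [hhalf]
    ring_nf
    tauto
  have h1x : 0 < 1 - x := by linarith
  rw [Real.rpow_def_of_pos h0, Real.rpow_def_of_pos h1x, ← Real.exp_add, ← Real.exp_add]
  congr 1
  rw [hhalf]
  simp only [Real.logb]
  rw [Real.log_mul hp.ne' h0.ne', Real.log_mul hp.ne' h1x.ne']
  field_simp
  ring

/-- The estimated market information Î^{L+1} = H^{L+1}_⋆ − Ĥ^{L+1} computed
from empirical conditional suffix frequencies `j i / n i` (with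
H^{L+1}_⋆ = 1 + H^L; the convention 0·log₂0 = 0 is automatic). -/
noncomputable def estInfo (L : ℕ) (p : Fin (2 ^ L) → ℝ) (n : Fin (2 ^ L) → ℕ)
    (j : (i : Fin (2 ^ L)) → Fin (n i + 1)) : ℝ :=
  ∑ i, (-(p i) * logb 2 (p i / 2)
    + p i * ((j i : ℝ) / (n i : ℝ)) * logb 2 (p i * ((j i : ℝ) / (n i : ℝ)))
    + p i * (1 - (j i : ℝ) / (n i : ℝ)) * logb 2 (p i * (1 - (j i : ℝ) / (n i : ℝ))))

/-- Moment-generating function of Î^{L+1} under the EMH conditioning ℰ: the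
counts `j i` are independent Binomial(n i, 1/2), so
M(t) = eᵗ ∏ᵢ ∑ⱼ C(nᵢ,j) 2^{−nᵢ} (j/nᵢ)^{t pᵢ (j/nᵢ)/ln 2} (1−j/nᵢ)^{t pᵢ (1−j/nᵢ)/ln 2},
where the powers are real powers (with 0⁰ = 1). -/
theorem stmt18 (L : ℕ) (hL : 0 < L) (p : Fin (2 ^ L) → ℝ)
    (hp : ∀ i, 0 < p i) (hp1 : ∀ i, p i ≤ 1) (hsum : ∑ i, p i = 1)
    (n : Fin (2 ^ L) → ℕ) (hn : ∀ i, 1 ≤ n i) (t : ℝ) :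
    ∑ j : (i : Fin (2 ^ L)) → Fin (n i + 1),
        (∏ i, ((n i).choose (j i) : ℝ) / 2 ^ (n i)) * Real.exp (t * estInfo L p n j)
      = Real.exp t * ∏ i, ∑ k ∈ Finset.range (n i + 1),
          (((n i).choose k : ℝ) / 2 ^ (n i)) *
            ((k : ℝ) / (n i : ℝ)) ^ (t * p i * ((k : ℝ) / (n i : ℝ)) / Real.log 2) *
            (1 - (k : ℝ) / (n i : ℝ)) ^ (t * p i * (1 - (k : ℝ) / (n i : ℝ)) / Real.log 2) := by
  have hexp : Real.exp t = ∏ i, Real.exp (t * p i) := by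
    rw [← Real.exp_sum, ← Finset.mul_sum, hsum, mul_one]
  rw [hexp, ← Finset.prod_mul_distrib]
  simp only [Finset.mul_sum, ← Fin.sum_univ_eq_sum_range]
  rw [Finset.prod_univ_sum, Fintype.piFinset_univ]
  refine Finset.sum_congr rfl fun j _ => ?_
  rw [estInfo, Finset.mul_sum, Real.exp_sum, ← Finset.prod_mul_distrib]
  refine Finset.prod_congr rfl fun i _ => ?_
  have hni : (0:ℝ) < n i := by exact_mod_cast hn i
  have hx0 : (0:ℝ) ≤ (j i : ℝ) / (n i : ℝ) := by positivity
  have hx1 : (j i : ℝ) / (n i : ℝ) ≤ 1 := by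
    rw [div_le_one hni]
    exact_mod_cast Nat.lt_succ_iff.mp (j i).isLt
  rw [key t (p i) _ (hp i) hx0 hx1]
  ring
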